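/- Let r and k be positive integers and let m be a positive integer such that every finite nonempty simple graph of r-splitter rank k contains a nonempty induced subgraph with at most m vertices and r-splitter rank k. Then every finite simple graph G with rk_r(G) = k+1 contains an induced subgraph H with at most r·m² + r·m + 1 vertices such that rk_r(H) = k+1. -/

import Mathlib

open Classical

/-- The closed `r`-neighborhood of `c` inside the induced subgraph `G[A]`:
all vertices of `A` joined to `c` by a walk of length at most `r` staying in `A`. -/
noncomputable def ball {V : Type*} (G : SimpleGraph V) (r : ℕ) (A : Finset V) (c : V) :
    Finset V :=
  A.filter (fun v => ∃ p : G.Walk c v, p.length ≤ r ∧ ∀ x ∈ p.support, x ∈ A)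

/-- The `r`-splitter rank of the induced subgraph `G[A]` (with `rank ∅ = 0`). -/
noncomputable def splitterRank {V : Type*} [DecidableEq V] (G : SimpleGraph V) (r : ℕ)
    (A : Finset V) : ℕ :=
  if _ : A.Nonempty then
    1 + A.attach.sup (fun c =>
      (ball G r A c.1).attach.inf'
        (Finset.attach_nonempty_iff.2 ⟨c.1, Finset.mem_filter.2 ⟨c.2,
          SimpleGraph.Walk.nil, by simp, by simp [c.2]⟩⟩)
        (fun s => splitterRank G r ((ball G r A c.1).erase s.1)))
  else 0
termination_by A.card
decreasing_by
  exact lt_of_lt_of_le (Finset.card_erase_lt_of_mem s.2)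
    (Finset.card_le_card (Finset.filter_subset _ _))

set_option linter.unusedSectionVars false

section Lemmas

variable {V : Type*} [DecidableEq V] {G : SimpleGraph V} {r : ℕ} {A H : Finset V} {c : V}

lemma ball_subset : ball G r A c ⊆ A := Finset.filter_subset _ _

lemma mem_ball_self (hc : c ∈ A) : c ∈ ball G r A c :=
  Finset.mem_filter.2 ⟨hc, SimpleGraph.Walk.nil, by simp, by simp [hc]⟩

lemma ball_mono (hHA : H ⊆ A) : ball G r H c ⊆ ball G r A c := by
  intro v hv
  rw [ball, Finset.mem_filter] at hv ⊢
  obtain ⟨hvH, p, hp, hsup⟩ := hv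
  exact ⟨hHA hvH, p, hp, fun x hx => hHA (hsup x hx)⟩

lemma splitterRank_def (hA : A.Nonempty) :
    splitterRank G r A = 1 + A.attach.sup (fun c =>
      (ball G r A c.1).attach.inf'
        (Finset.attach_nonempty_iff.2 ⟨c.1, mem_ball_self c.2⟩)
        (fun s => splitterRank G r ((ball G r A c.1).erase s.1))) := by
  rw [splitterRank, dif_pos hA]

lemma splitterRank_empty : splitterRank G r (∅ : Finset V) = 0 := by
  rw [splitterRank]; simp

lemma splitterRank_nonempty (h : 1 ≤ splitterRank G r A) : A.Nonempty := by
  by_contra hne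
  rw [splitterRank, dif_neg hne] at h; omega

lemma splitterRank_le (t : ℕ)
    (h : ∀ c ∈ A, ∃ s ∈ ball G r A c, splitterRank G r ((ball G r A c).erase s) ≤ t) :
    splitterRank G r A ≤ t + 1 := by
  by_cases hA : A.Nonempty
  · rw [splitterRank, dif_pos hA]
    rw [Nat.add_comm]
    refine Nat.add_le_add_right (Finset.sup_le fun c _ => ?_) 1
    obtain ⟨s, hs, hle⟩ := h c.1 c.2
    exact le_trans (Finset.inf'_le _ (Finset.mem_attach _ ⟨s, hs⟩)) hle
  · rw [splitterRank, dif_neg hA]; omega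

lemma splitterRank_lower (t : ℕ) (hc : c ∈ A)
    (h : ∀ s ∈ ball G r A c, t ≤ splitterRank G r ((ball G r A c).erase s)) :
    t + 1 ≤ splitterRank G r A := by
  rw [splitterRank, dif_pos ⟨c, hc⟩, Nat.add_comm t 1]
  refine Nat.add_le_add_left ?_ 1
  refine le_trans ?_ (Finset.le_sup (Finset.mem_attach _ ⟨c, hc⟩))
  exact Finset.le_inf' _ _ fun s _ => h s.1 s.2

lemma splitterRank_pos (hA : A.Nonempty) : 1 ≤ splitterRank G r A := by
  rw [splitterRank, dif_pos hA]; omega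

lemma splitterRank_center (hc : c ∈ A) :
    ∃ s ∈ ball G r A c,
      splitterRank G r ((ball G r A c).erase s) + 1 ≤ splitterRank G r A := by
  have hball : (ball G r A c).Nonempty := ⟨c, mem_ball_self hc⟩
  obtain ⟨s, _, hs⟩ := Finset.exists_mem_eq_inf' (Finset.attach_nonempty_iff.2 hball)
    (fun s : {x // x ∈ ball G r A c} => splitterRank G r ((ball G r A c).erase s.1))
  refine ⟨s.1, s.2, ?_⟩
  rw [splitterRank_def ⟨c, hc⟩, Nat.add_comm _ 1]
  refine Nat.add_le_add_left ?_ 1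
  refine le_trans ?_ (Finset.le_sup (Finset.mem_attach _ ⟨c, hc⟩))
  exact le_of_eq hs.symm

lemma splitterRank_center_sup (hA : A.Nonempty) :
    ∃ c ∈ A, ∀ s ∈ ball G r A c,
      splitterRank G r A ≤ splitterRank G r ((ball G r A c).erase s) + 1 := by
  rw [splitterRank, dif_pos hA]
  obtain ⟨c, _, hc⟩ := Finset.exists_mem_eq_sup A.attach (Finset.attach_nonempty_iff.2 hA)
    (fun c : {x // x ∈ A} =>
      (ball G r A c.1).attach.inf'
        (Finset.attach_nonempty_iff.2 ⟨c.1, mem_ball_self c.2⟩)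
        (fun s => splitterRank G r ((ball G r A c.1).erase s.1)))
  refine ⟨c.1, c.2, fun s hs => ?_⟩
  rw [hc, Nat.add_comm]
  refine Nat.add_le_add_right ?_ 1
  exact Finset.inf'_le _ (Finset.mem_attach _ ⟨s, hs⟩)

lemma splitterRank_mono : ∀ (n : ℕ) (A H : Finset V), A.card ≤ n → H ⊆ A →
    splitterRank G r H ≤ splitterRank G r A := by
  intro n
  induction n with
  | zero =>
    intro A H hA hHA
    have : A = ∅ := Finset.card_eq_zero.1 (Nat.le_zero.1 hA)
    subst this
    rw [Finset.subset_empty.1 hHA]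
  | succ n ih =>
    intro A H hA hHA
    by_cases hH : H.Nonempty
    · have hAne : A.Nonempty := hH.mono hHA
      obtain ⟨t, ht⟩ : ∃ t, splitterRank G r A = t + 1 :=
        ⟨splitterRank G r A - 1, by have := splitterRank_pos (G := G) (r := r) hAne; omega⟩
      rw [ht]
      refine splitterRank_le t fun c hc => ?_
      obtain ⟨s, hs, hrk⟩ := splitterRank_center (G := G) (r := r) (hHA hc)
      rw [ht] at hrk
      have hcard : ((ball G r A c).erase s).card ≤ n := by
        rw [Finset.card_erase_of_mem hs]
        have := Finset.card_le_card (ball_subset (G := G) (r := r) (A := A) (c := c))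
        omega
      by_cases hsH : s ∈ ball G r H c
      · refine ⟨s, hsH, ?_⟩
        refine le_trans (ih _ _ hcard ?_) (by omega)
        exact Finset.erase_subset_erase _ (ball_mono hHA)
      · refine ⟨c, mem_ball_self hc, ?_⟩
        refine le_trans (ih _ _ hcard ?_) (by omega)
        intro x hx
        have hx' := Finset.mem_of_mem_erase hx
        exact Finset.mem_erase.2 ⟨fun h => hsH (h ▸ hx'), ball_mono hHA hx'⟩
    · rw [Finset.not_nonempty_iff_eq_empty.1 hH, splitterRank_empty]
      omega

lemma splitterRank_mono' (hHA : H ⊆ A) : splitterRank G r H ≤ splitterRank G r A :=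
  splitterRank_mono _ A H le_rfl hHA

lemma splitterRank_drop (v : V) : splitterRank G r A ≤ splitterRank G r (A.erase v) + 1 := by
  refine splitterRank_le _ fun c hc => ?_
  by_cases hv : v ∈ ball G r A c
  · exact ⟨v, hv, splitterRank_mono' (Finset.erase_subset_erase _ ball_subset)⟩
  · refine ⟨c, mem_ball_self hc, splitterRank_mono' ?_⟩
    intro x hx
    have hx' := Finset.mem_of_mem_erase hx
    exact Finset.mem_erase.2 ⟨fun h => hv (h ▸ hx'), ball_subset hx'⟩

lemma splitterRank_intermediate : ∀ (n : ℕ) (A : Finset V) (k : ℕ), A.card ≤ n → 1 ≤ k →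
    k ≤ splitterRank G r A → ∃ H ⊆ A, splitterRank G r H = k := by
  intro n
  induction n with
  | zero =>
    intro A k hA hk hrk
    exfalso
    have : A = ∅ := Finset.card_eq_zero.1 (Nat.le_zero.1 hA)
    rw [this, splitterRank_empty] at hrk
    omega
  | succ n ih =>
    intro A k hA hk hrk
    rcases eq_or_lt_of_le hrk with heq | hlt
    · exact ⟨A, Finset.Subset.refl A, heq.symm⟩
    · have hAne : A.Nonempty := splitterRank_nonempty (le_trans hk (le_of_lt hlt))
      obtain ⟨v, hv⟩ := hAne
      have h1 : k ≤ splitterRank G r (A.erase v) := by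
        have := splitterRank_drop (G := G) (r := r) (A := A) v
        omega
      obtain ⟨H, hH1, hH2⟩ := ih (A.erase v) k
        (by have := Finset.card_erase_lt_of_mem hv; omega) hk h1
      exact ⟨H, le_trans hH1 (Finset.erase_subset _ _), hH2⟩

section Transfer

variable {W : Type*} [DecidableEq W] {G' : SimpleGraph W} {f : W ↪ V}

lemma walk_lift (hadj : ∀ a b, G'.Adj a b ↔ G.Adj (f a) (f b)) :
    ∀ {a b : V} (q : G.Walk a b) (a' : W), f a' = a →
      (∀ x ∈ q.support, ∃ w, f w = x) →
      ∃ (b' : W) (p : G'.Walk a' b'), f b' = b ∧ p.length = q.length ∧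
        p.support.map f = q.support := by
  intro a b q
  induction q with
  | nil =>
    intro a' ha _
    exact ⟨a', SimpleGraph.Walk.nil, ha, rfl, by simp [ha]⟩
  | @cons u v b h q' ih =>
    intro a' ha hsup
    obtain ⟨v', hv⟩ := hsup v (by simp)
    have hadj' : G'.Adj a' v' := (hadj a' v').2 (by rw [ha, hv]; exact h)
    obtain ⟨b', p', hb, hlen, hsupp⟩ := ih v' hv (fun x hx => hsup x (by simp [hx]))
    exact ⟨b', SimpleGraph.Walk.cons hadj' p', hb, by simp [hlen],
      by simp [hsupp, ha]⟩

lemma ball_map (hadj : ∀ a b, G'.Adj a b ↔ G.Adj (f a) (f b)) (T : Finset W) (c : W) :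
    (ball G' r T c).map f = ball G r (T.map f) (f c) := by
  ext x
  constructor
  · intro hx
    obtain ⟨v, hv, rfl⟩ := Finset.mem_map.1 hx
    obtain ⟨hvT, p, hp, hsup⟩ := Finset.mem_filter.1 hv
    refine Finset.mem_filter.2 ⟨Finset.mem_map_of_mem f hvT,
      p.map ⟨f, fun h => (hadj _ _).1 h⟩, by simp [hp], ?_⟩
    intro y hy
    rw [SimpleGraph.Walk.support_map] at hy
    obtain ⟨z, hz, rfl⟩ := List.mem_map.1 hy
    exact Finset.mem_map_of_mem f (hsup z hz)
  · intro hx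
    obtain ⟨hxT, q, hq, hsup⟩ := Finset.mem_filter.1 hx
    obtain ⟨b', p, hb, hlen, hsupp⟩ := walk_lift hadj q c rfl
      (fun y hy => by
        obtain ⟨z, hz, hzz⟩ := Finset.mem_map.1 (hsup y hy)
        exact ⟨z, hzz⟩)
    have hTmem : ∀ z ∈ p.support, z ∈ T := by
      intro z hz
      have hfz : f z ∈ q.support := by
        rw [← hsupp]; exact List.mem_map_of_mem (f := f) hz
      obtain ⟨z', hz', hzz⟩ := Finset.mem_map.1 (hsup _ hfz)
      rwa [← f.injective hzz]
    exact Finset.mem_map.2 ⟨b', Finset.mem_filter.2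
      ⟨hTmem b' p.end_mem_support, p, by omega, hTmem⟩, hb⟩

lemma splitterRank_map (hadj : ∀ a b, G'.Adj a b ↔ G.Adj (f a) (f b)) :
    ∀ (n : ℕ) (T : Finset W), T.card ≤ n →
      splitterRank G' r T = splitterRank G r (T.map f) := by
  intro n
  induction n with
  | zero =>
    intro T hT
    have : T = ∅ := Finset.card_eq_zero.1 (Nat.le_zero.1 hT)
    subst this
    simp [splitterRank_empty]
  | succ n ih =>
    intro T hT
    by_cases hTne : T.Nonempty
    · have hTm : (T.map f).Nonempty := Finset.map_nonempty.2 hTne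
      have hcard : ∀ c (s : W), s ∈ ball G' r T c → ((ball G' r T c).erase s).card ≤ n := by
        intro c s hs
        rw [Finset.card_erase_of_mem hs]
        have := Finset.card_le_card (ball_subset (G := G') (r := r) (A := T) (c := c))
        omega
      refine le_antisymm ?_ ?_
      · obtain ⟨t, ht⟩ : ∃ t, splitterRank G r (T.map f) = t + 1 :=
          ⟨splitterRank G r (T.map f) - 1, by have := splitterRank_pos (G := G) (r := r) hTm; omega⟩
        rw [ht]
        refine splitterRank_le t fun c hc => ?_
        obtain ⟨S, hS, hrk⟩ := splitterRank_center (G := G) (r := r)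
          (Finset.mem_map_of_mem f hc)
        rw [← ball_map hadj] at hS
        obtain ⟨s, hs, rfl⟩ := Finset.mem_map.1 hS
        refine ⟨s, hs, ?_⟩
        rw [ih _ (hcard c s hs), Finset.map_erase, ball_map hadj]
        rw [ht] at hrk
        omega
      · obtain ⟨t, ht⟩ : ∃ t, splitterRank G' r T = t + 1 :=
          ⟨splitterRank G' r T - 1, by have := splitterRank_pos (G := G') (r := r) hTne; omega⟩
        rw [ht]
        refine splitterRank_le t fun C hC => ?_
        obtain ⟨c, hc, rfl⟩ := Finset.mem_map.1 hC
        obtain ⟨s, hs, hrk⟩ := splitterRank_center (G := G') (r := r) hc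
        refine ⟨f s, ?_, ?_⟩
        · rw [← ball_map hadj]
          exact Finset.mem_map_of_mem f hs
        · rw [← ball_map hadj, ← Finset.map_erase, ← ih _ (hcard c s hs)]
          rw [ht] at hrk
          omega
    · rw [Finset.not_nonempty_iff_eq_empty.1 hTne]
      simp [splitterRank_empty]

end Transfer

end Lemmas

universe u

/-- Inductive step: if every nonempty graph of `r`-splitter rank `k` contains a nonempty induced
subgraph of rank `k` with at most `m` vertices, then every graph of rank `k+1` contains an
induced subgraph of rank `k+1` with at most `r·m² + r·m + 1` vertices. -/
theorem inductive_step {V : Type u} [Fintype V] [DecidableEq V] (G : SimpleGraph V)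
    (r k m : ℕ) (hr : 0 < r) (hk : 0 < k) (hm : 0 < m)
    (hyp : ∀ (W : Type u) [Fintype W] [DecidableEq W] [Nonempty W] (G' : SimpleGraph W),
      splitterRank G' r Finset.univ = k →
      ∃ H : Finset W, H.Nonempty ∧ H.card ≤ m ∧ splitterRank G' r H = k)
    (hG : splitterRank G r Finset.univ = k + 1) :
    ∃ H : Finset V, H.card ≤ r * m ^ 2 + r * m + 1 ∧ splitterRank G r H = k + 1 := by
  have huniv : (Finset.univ : Finset V).Nonempty := by
    by_contra h
    rw [Finset.not_nonempty_iff_eq_empty.1 h, splitterRank_empty] at hG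
    omega
  -- shrinking lemma transported to subsets of V
  have hshrink : ∀ S : Finset V, S.Nonempty → splitterRank G r S = k →
      ∃ D, D ⊆ S ∧ D.card ≤ m ∧ splitterRank G r D = k := by
    intro S hS hSk
    have : Nonempty {x // x ∈ S} := ⟨⟨hS.choose, hS.choose_spec⟩⟩
    have htrans : ∀ T : Finset {x // x ∈ S},
        splitterRank (G.comap (Function.Embedding.subtype (· ∈ S))) r T
          = splitterRank G r (T.map (Function.Embedding.subtype (· ∈ S))) := by
      intro T
      exact splitterRank_map (fun a b => Iff.rfl) T.card T le_rfl
    obtain ⟨H', hne', hcard', hrank'⟩ := hyp {x // x ∈ S}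
      (G.comap (Function.Embedding.subtype (· ∈ S))) (by
        rw [htrans Finset.univ, Finset.univ_eq_attach, Finset.attach_map_val]
        exact hSk)
    refine ⟨H'.map (Function.Embedding.subtype (· ∈ S)), ?_, ?_, ?_⟩
    · intro x hx
      obtain ⟨y, _, rfl⟩ := Finset.mem_map.1 hx
      exact y.2
    · rw [Finset.card_map]; exact hcard'
    · rw [← htrans H']; exact hrank'
  obtain ⟨c, -, hc⟩ := splitterRank_center_sup (G := G) (r := r) huniv
  set B := ball G r (Finset.univ : Finset V) c with hB
  have hBk : ∀ s ∈ B, k ≤ splitterRank G r (B.erase s) := by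
    intro s hs
    have := hc s hs
    rw [hG] at this
    omega
  have hcB : c ∈ B := mem_ball_self (Finset.mem_univ c)
  have hE : ∀ s : V, ∃ E : Finset V, E ⊆ B.erase s ∧ E.card ≤ m ∧
      (s ∈ B → splitterRank G r E = k) := by
    intro s
    by_cases hs : s ∈ B
    · obtain ⟨F, hF1, hF2⟩ := splitterRank_intermediate (B.erase s).card (B.erase s) k
        le_rfl hk (hBk s hs)
      have hFne : F.Nonempty := splitterRank_nonempty (hF2 ▸ hk)
      obtain ⟨D, hD1, hD2, hD3⟩ := hshrink F hFne hF2
      exact ⟨D, hD1.trans hF1, hD2, fun _ => hD3⟩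
    · exact ⟨∅, Finset.empty_subset _, by simp, fun h => absurd h hs⟩
  choose E hEsub hEcard hErank using hE
  have hP : ∀ x : V, ∃ P : Finset V, c ∈ P ∧ (P.erase c).card ≤ r ∧
      (x ∈ B → x ∈ P ∧ ∀ Hs : Finset V, P ⊆ Hs → x ∈ ball G r Hs c) := by
    intro x
    by_cases hx : x ∈ B
    · obtain ⟨-, p, hp, -⟩ := Finset.mem_filter.1 hx
      refine ⟨p.support.toFinset, by simp, ?_, fun _ => ⟨by simp, ?_⟩⟩
      · have h1 : p.support.toFinset.card ≤ p.length + 1 := by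
          have := List.toFinset_card_le p.support
          rw [SimpleGraph.Walk.length_support] at this
          exact this
        have h2 := Finset.card_erase_of_mem
          (show c ∈ p.support.toFinset by simp)
        omega
      · intro Hs hPH
        exact Finset.mem_filter.2 ⟨hPH (by simp), p, hp, fun y hy => hPH (by simp [hy])⟩
    · exact ⟨{c}, Finset.mem_singleton_self c, by simp, fun h => absurd h hx⟩
  choose P hPc hPcard hPB using hP
  set D0 := E c with hD0
  have hD0B : D0 ⊆ B := (hEsub c).trans (Finset.erase_subset _ _)
  set K := D0 ∪ D0.biUnion E with hK
  have hKB : K ⊆ B := by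
    intro x hx
    rcases Finset.mem_union.1 hx with h | h
    · exact hD0B h
    · obtain ⟨d, hd, hxd⟩ := Finset.mem_biUnion.1 h
      exact (Finset.erase_subset _ _) (hEsub d hxd)
  set H := insert c (K.biUnion P) with hHdef
  have hPsubH : ∀ x ∈ K, P x ⊆ H :=
    fun x hx => (Finset.subset_biUnion_of_mem P hx).trans (Finset.subset_insert _ _)
  have hKball : ∀ x ∈ K, x ∈ ball G r H c :=
    fun x hx => ((hPB x (hKB hx)).2) H (hPsubH x hx)
  have hcH : c ∈ H := Finset.mem_insert_self _ _
  have hup : splitterRank G r H ≤ k + 1 := hG ▸ splitterRank_mono' (Finset.subset_univ H)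
  have hlow : k + 1 ≤ splitterRank G r H := by
    refine splitterRank_lower k hcH ?_
    intro s hs
    by_cases hsD : s ∈ D0
    · have hsB : s ∈ B := hD0B hsD
      have hsub : E s ⊆ (ball G r H c).erase s := by
        intro x hx
        refine Finset.mem_erase.2 ⟨(Finset.mem_erase.1 (hEsub s hx)).1, hKball x ?_⟩
        exact Finset.mem_union_right _ (Finset.mem_biUnion.2 ⟨s, hsD, hx⟩)
      calc k = splitterRank G r (E s) := (hErank s hsB).symm
        _ ≤ _ := splitterRank_mono' hsub
    · have hsub : D0 ⊆ (ball G r H c).erase s := by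
        intro x hx
        exact Finset.mem_erase.2 ⟨fun h => hsD (h ▸ hx),
          hKball x (Finset.mem_union_left _ hx)⟩
      calc k = splitterRank G r D0 := (hErank c hcB).symm
        _ ≤ _ := splitterRank_mono' hsub
  have hcard : H.card ≤ r * m ^ 2 + r * m + 1 := by
    have hsub : H ⊆ insert c (K.biUnion fun x => (P x).erase c) := by
      intro y hy
      rcases Finset.mem_insert.1 hy with rfl | hy
      · exact Finset.mem_insert_self _ _
      · obtain ⟨x, hx, hyx⟩ := Finset.mem_biUnion.1 hy
        by_cases hyc : y = c
        · exact hyc ▸ Finset.mem_insert_self _ _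
        · exact Finset.mem_insert_of_mem
            (Finset.mem_biUnion.2 ⟨x, hx, Finset.mem_erase.2 ⟨hyc, hyx⟩⟩)
    have h1 : H.card ≤ (K.biUnion fun x => (P x).erase c).card + 1 :=
      le_trans (Finset.card_le_card hsub) (Finset.card_insert_le _ _)
    have h3 : (K.biUnion fun x => (P x).erase c).card ≤ ∑ x ∈ K, ((P x).erase c).card :=
      Finset.card_biUnion_le
    have h4 : ∑ x ∈ K, ((P x).erase c).card ≤ K.card * r := by
      calc ∑ x ∈ K, ((P x).erase c).card ≤ ∑ _x ∈ K, r :=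
            Finset.sum_le_sum fun x _ => hPcard x
        _ = K.card * r := by rw [Finset.sum_const, smul_eq_mul]
    have h5 : K.card ≤ m + m * m := by
      have h6 : (D0.biUnion E).card ≤ ∑ d ∈ D0, (E d).card := Finset.card_biUnion_le
      have h7 : ∑ d ∈ D0, (E d).card ≤ D0.card * m := by
        calc ∑ d ∈ D0, (E d).card ≤ ∑ _d ∈ D0, m := Finset.sum_le_sum fun d _ => hEcard d
          _ = D0.card * m := by rw [Finset.sum_const, smul_eq_mul]
      have h8 : D0.card ≤ m := hEcard c
      have h9 : K.card ≤ D0.card + (D0.biUnion E).card := by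
        rw [hK]; exact Finset.card_union_le _ _
      have h10 : D0.card * m ≤ m * m := Nat.mul_le_mul_right m h8
      omega
    have h11 : K.card * r ≤ (m + m * m) * r := Nat.mul_le_mul_right r h5
    have h12 : (m + m * m) * r + 1 = r * m ^ 2 + r * m + 1 := by ring
    linarith
  exact ⟨H, hcard, le_antisymm hup hlow⟩
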